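/- For positive integers n, r and q ≥ 1, the number of compositions of n into r positive parts in which exactly m parts exceed q equals ∑_{j=m}^{min(r, ⌊(n-r)/q⌋)} (-1)^{m+j} * C(j, m) * C(r, j) * C(n - q*j - 1, r - 1). -/

import Mathlib

/-- The compositions of `n` into `r` positive parts, as a `Finset` of tuples. -/
def compositions (n r : ℕ) : Finset (Fin r → ℕ) :=
  (Fintype.piFinset fun _ => Finset.range (n + 1)).filter
    fun c => (∀ i, 0 < c i) ∧ ∑ i, c i = n

/-- Integer-valued binomial coefficient with the convention `C(a, b) = 0` when `b < 0`
or `b > a`. -/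
def chZ (a b : ℤ) : ℤ := if 0 ≤ b ∧ b ≤ a then (a.toNat.choose b.toNat : ℤ) else 0

open Finset

lemma mem_compositions {n r : ℕ} {c : Fin r → ℕ} :
    c ∈ compositions n r ↔ (∀ i, 0 < c i) ∧ ∑ i, c i = n := by
  constructor
  · intro h; exact (Finset.mem_filter.mp h).2
  · intro h
    refine Finset.mem_filter.mpr ⟨?_, h⟩
    rw [Fintype.mem_piFinset]
    intro i
    rw [Finset.mem_range, Nat.lt_succ_iff, ← h.2]
    exact Finset.single_le_sum (fun j _ => Nat.zero_le _) (Finset.mem_univ i)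

lemma sum_ge_card {r n : ℕ} {c : Fin r → ℕ} (hc : c ∈ compositions n r) : r ≤ n := by
  have h := mem_compositions.mp hc
  calc r = ∑ _i : Fin r, 1 := by simp
  _ ≤ ∑ i, c i := Finset.sum_le_sum (fun i _ => h.1 i)
  _ = n := h.2

lemma card_compositions : ∀ r N : ℕ, 1 ≤ r → r ≤ N →
    (compositions N r).card = (N - 1).choose (r - 1) := by
  intro r
  induction r with
  | zero => omega
  | succ r ih =>
    intro N _ hN
    rcases Nat.eq_zero_or_pos r with hr0 | hr
    · subst hr0
      have hs : compositions N 1 = {fun _ => N} := by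
        ext c
        simp only [mem_compositions, Finset.mem_singleton]
        constructor
        · rintro ⟨h1, h2⟩
          funext i
          have : i = 0 := Subsingleton.elim _ _
          subst this
          simpa using h2
        · rintro rfl
          refine ⟨fun i => hN, by simp⟩
      rw [hs]
      simp
    · -- r ≥ 1, counting by first entry
      have hmaps : ∀ c ∈ compositions N (r + 1), c 0 ∈ Finset.Icc 1 (N - r) := by
        intro c hc
        obtain ⟨h1, h2⟩ := mem_compositions.mp hc
        have htail : r ≤ ∑ i : Fin r, c i.succ := by
          calc r = ∑ _i : Fin r, 1 := by simp
          _ ≤ _ := Finset.sum_le_sum (fun i _ => h1 i.succ)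
        rw [Fin.sum_univ_succ] at h2
        simp only [Finset.mem_Icc]
        exact ⟨h1 0, by omega⟩
      rw [Finset.card_eq_sum_card_fiberwise hmaps]
      have hfib : ∀ a ∈ Finset.Icc 1 (N - r),
          ((compositions N (r + 1)).filter fun c => c 0 = a).card
            = (compositions (N - a) r).card := by
        intro a ha
        simp only [Finset.mem_Icc] at ha
        refine Finset.card_bij' (fun c _ => Fin.tail c) (fun d _ => Fin.cons a d)
          ?_ ?_ ?_ ?_
        · intro c hc
          simp only [Finset.mem_filter] at hc
          obtain ⟨hc, hc0⟩ := hc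
          obtain ⟨h1, h2⟩ := mem_compositions.mp hc
          rw [Fin.sum_univ_succ, hc0] at h2
          refine mem_compositions.mpr ⟨fun i => h1 i.succ, ?_⟩
          show ∑ i : Fin r, c i.succ = N - a
          omega
        · intro d hd
          obtain ⟨h1, h2⟩ := mem_compositions.mp hd
          refine Finset.mem_filter.mpr ⟨mem_compositions.mpr ⟨?_, ?_⟩, by simp⟩
          · intro i
            refine Fin.cases ?_ ?_ i
            · simpa using (show 0 < a from ha.1)
            · intro j; simpa using h1 j
          · rw [Fin.sum_univ_succ]
            simp only [Fin.cons_zero, Fin.cons_succ]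
            omega
        · intro c hc
          simp only [Finset.mem_filter] at hc
          obtain ⟨-, h0⟩ := hc
          subst h0
          exact Fin.cons_self_tail c
        · intro d hd
          simp [Fin.tail_cons]
      rw [Finset.sum_congr rfl hfib]
      have hval : ∀ a ∈ Finset.Icc 1 (N - r),
          (compositions (N - a) r).card = (N - a - 1).choose (r - 1) := by
        intro a ha
        simp only [Finset.mem_Icc] at ha
        exact ih (N - a) hr (by omega)
      rw [Finset.sum_congr rfl hval]
      -- reindex and hockey stick
      have hre : ∑ a ∈ Finset.Icc 1 (N - r), (N - a - 1).choose (r - 1)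
          = ∑ x ∈ Finset.Icc (r - 1) (N - 2), x.choose (r - 1) := by
        refine Finset.sum_nbij' (fun a => N - a - 1) (fun x => N - x - 1)
          ?_ ?_ ?_ ?_ ?_
        · intro a ha; simp only [Finset.mem_Icc] at *; omega
        · intro x hx; simp only [Finset.mem_Icc] at *; omega
        · intro a ha; simp only [Finset.mem_Icc] at ha
          show N - (N - a - 1) - 1 = a
          omega
        · intro x hx; simp only [Finset.mem_Icc] at hx
          show N - (N - x - 1) - 1 = x
          omega
        · intro a ha; rfl
      rw [hre, Nat.sum_Icc_choose]
      have h2 : N - 2 + 1 = N - 1 := by omega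
      have h3 : r - 1 + 1 = r := by omega
      rw [h2, h3]
      rfl

/-- Counting compositions with prescribed positions exceeding `q`. -/
lemma card_compositions_ge (n r q j : ℕ) (hr : 1 ≤ r) (S : Finset (Fin r)) (hS : S.card = j) :
    ((compositions n r).filter fun c => ∀ i ∈ S, q < c i).card
      = (compositions (n - q * j) r).card := by
  rcases le_or_gt (q * j) n with hqn | hqn
  · refine Finset.card_bij'
      (fun c _ => fun i => c i - if i ∈ S then q else 0)
      (fun d _ => fun i => d i + if i ∈ S then q else 0) ?_ ?_ ?_ ?_
    · intro c hc
      simp only [Finset.mem_filter] at hc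
      obtain ⟨hc, hcS⟩ := hc
      obtain ⟨h1, h2⟩ := mem_compositions.mp hc
      refine mem_compositions.mpr ⟨?_, ?_⟩
      · intro i
        show 0 < c i - if i ∈ S then q else 0
        have h3 := h1 i
        by_cases hiS : i ∈ S
        · have := hcS i hiS
          simp only [hiS, if_pos]
          omega
        · simp only [hiS, if_neg, not_false_iff]
          omega
      · show ∑ i, (c i - if i ∈ S then q else 0) = n - q * j
        rw [Finset.sum_tsub_distrib]
        · rw [h2]
          congr 1
          rw [Finset.sum_ite_mem, Finset.univ_inter, Finset.sum_const, hS, smul_eq_mul,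
            mul_comm]
        · intro i _
          by_cases hiS : i ∈ S
          · simp only [hiS, if_pos]
            exact le_of_lt (hcS i hiS)
          · simp [hiS]
    · intro d hd
      obtain ⟨h1, h2⟩ := mem_compositions.mp hd
      refine Finset.mem_filter.mpr ⟨mem_compositions.mpr ⟨?_, ?_⟩, ?_⟩
      · intro i
        show 0 < d i + if i ∈ S then q else 0
        have := h1 i
        omega
      · show ∑ i, (d i + if i ∈ S then q else 0) = n
        rw [Finset.sum_add_distrib, h2]
        rw [Finset.sum_ite_mem, Finset.univ_inter, Finset.sum_const, hS, smul_eq_mul]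
        have hcomm : j * q = q * j := Nat.mul_comm j q
        omega
      · intro i hiS
        show q < d i + if i ∈ S then q else 0
        simp only [hiS, if_pos]
        have := h1 i
        omega
    · intro c hc
      simp only [Finset.mem_filter] at hc
      obtain ⟨hc', hcS⟩ := hc
      funext i
      show (c i - if i ∈ S then q else 0) + (if i ∈ S then q else 0) = c i
      by_cases hiS : i ∈ S
      · simp only [hiS, if_pos]
        have := hcS i hiS
        omega
      · simp [hiS]
    · intro d hd
      funext i
      show (d i + if i ∈ S then q else 0) - (if i ∈ S then q else 0) = d i
      by_cases hiS : i ∈ S <;> simp [hiS]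
  · -- q * j > n : both sides are zero
    have hj1 : 1 ≤ j := by
      rcases Nat.eq_zero_or_pos j with h | h
      · subst h; simp at hqn
      · exact h
    rw [Finset.card_eq_zero.mpr, Finset.card_eq_zero.mpr]
    · apply Finset.eq_empty_of_forall_notMem
      intro c hc
      obtain ⟨h1, h2⟩ := mem_compositions.mp hc
      have hz : n - q * j = 0 := by omega
      rw [hz] at h2
      have hpos : 0 < ∑ i, c i :=
        Finset.sum_pos (fun i _ => h1 i) ⟨⟨0, hr⟩, Finset.mem_univ _⟩
      omega
    · apply Finset.eq_empty_of_forall_notMem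
      intro c hc
      simp only [Finset.mem_filter] at hc
      obtain ⟨hc, hcS⟩ := hc
      obtain ⟨h1, h2⟩ := mem_compositions.mp hc
      have hsub : ∑ i ∈ S, c i ≤ n := by
        rw [← h2]
        exact Finset.sum_le_sum_of_subset (Finset.subset_univ S)
      have hge : q * j + j ≤ ∑ i ∈ S, c i := by
        calc q * j + j = ∑ _i ∈ S, (q + 1) := by
              rw [Finset.sum_const, hS, smul_eq_mul]; ring
        _ ≤ ∑ i ∈ S, c i := Finset.sum_le_sum (fun i hi => hcS i hi)
      omega

/-- The double-counting identity. -/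
lemma double_count (n r q j : ℕ) (hr : 1 ≤ r) :
    r.choose j * (compositions (n - q * j) r).card
      = ∑ k ∈ Finset.range (r + 1), k.choose j *
          ((compositions n r).filter
            fun c => (Finset.univ.filter fun i => q < c i).card = k).card := by
  have key1 : ∑ S ∈ Finset.powersetCard j (Finset.univ : Finset (Fin r)),
      ((compositions n r).filter fun c => ∀ i ∈ S, q < c i).card
      = r.choose j * (compositions (n - q * j) r).card := by
    rw [Finset.sum_congr rfl (fun S hS => card_compositions_ge n r q j hr S
      (Finset.mem_powersetCard.mp hS).2)]
    rw [Finset.sum_const, smul_eq_mul, Finset.card_powersetCard, Finset.card_univ,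
      Fintype.card_fin]
  rw [← key1]
  have key2 : ∀ S : Finset (Fin r),
      ((compositions n r).filter fun c => ∀ i ∈ S, q < c i).card
        = ∑ c ∈ compositions n r, if ∀ i ∈ S, q < c i then 1 else 0 := by
    intro S; rw [Finset.card_filter]
  rw [Finset.sum_congr rfl (fun S _ => key2 S), Finset.sum_comm]
  have key3 : ∀ c : Fin r → ℕ,
      (∑ S ∈ Finset.powersetCard j (Finset.univ : Finset (Fin r)),
        if ∀ i ∈ S, q < c i then 1 else 0)
        = ((Finset.univ.filter fun i => q < c i).card).choose j := by
    intro c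
    rw [← Finset.card_filter]
    rw [← Finset.card_powersetCard]
    congr 1
    ext S
    simp only [Finset.mem_filter, Finset.mem_powersetCard, Finset.subset_univ, true_and,
      Finset.mem_univ]
    constructor
    · rintro ⟨hcard, hall⟩
      refine ⟨fun x hx => ?_, hcard⟩
      simp only [Finset.mem_filter, Finset.mem_univ, true_and]
      exact hall x hx
    · rintro ⟨hsub, hcard⟩
      refine ⟨hcard, fun i hi => ?_⟩
      have := hsub hi
      simp only [Finset.mem_filter] at this
      exact this.2
  rw [Finset.sum_congr rfl (fun c _ => key3 c)]
  have hmaps : ∀ c ∈ compositions n r,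
      (Finset.univ.filter fun i => q < c i).card ∈ Finset.range (r + 1) := by
    intro c _
    rw [Finset.mem_range, Nat.lt_succ_iff]
    calc (Finset.univ.filter fun i => q < c i).card
        ≤ (Finset.univ : Finset (Fin r)).card := Finset.card_filter_le _ _
    _ = r := by rw [Finset.card_univ, Fintype.card_fin]
  rw [← Finset.sum_fiberwise_of_maps_to hmaps
    (fun c => ((Finset.univ.filter fun i => q < c i).card).choose j)]
  apply Finset.sum_congr rfl
  intro k _
  rw [Finset.sum_congr rfl (fun c hc => by
    rw [(Finset.mem_filter.mp hc).2]), Finset.sum_const, smul_eq_mul, mul_comm]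

lemma inv_aux (k m r : ℕ) (hk : k ≤ r) :
    ∑ j ∈ Finset.range (r + 1), (-1 : ℤ) ^ (m + j) * (j.choose m : ℤ) * (k.choose j : ℤ)
      = if k = m then 1 else 0 := by
  have hstep : ∑ j ∈ Finset.range (r + 1),
      (-1 : ℤ) ^ (m + j) * (j.choose m : ℤ) * (k.choose j : ℤ)
      = ∑ j ∈ Finset.range (k + 1),
        (-1 : ℤ) ^ (m + j) * (j.choose m : ℤ) * (k.choose j : ℤ) := by
    symm
    apply Finset.sum_subset
    · intro x hx
      simp only [Finset.mem_range] at *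
      omega
    · intro x _ hx
      simp only [Finset.mem_range, not_lt] at hx
      rw [Nat.choose_eq_zero_of_lt (show k < x by omega)]
      simp
  rw [hstep]
  rcases lt_or_ge k m with hkm | hkm
  · rw [if_neg (by omega)]
    apply Finset.sum_eq_zero
    intro j hj
    simp only [Finset.mem_range] at hj
    rw [Nat.choose_eq_zero_of_lt (show j < m by omega)]
    simp
  · -- m ≤ k
    have hsplit : ∑ j ∈ Finset.range (k + 1),
        (-1 : ℤ) ^ (m + j) * (j.choose m : ℤ) * (k.choose j : ℤ)
        = ∑ j ∈ Finset.Icc m k,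
          (-1 : ℤ) ^ (m + j) * (j.choose m : ℤ) * (k.choose j : ℤ) := by
      symm
      apply Finset.sum_subset
      · intro x hx
        simp only [Finset.mem_Icc, Finset.mem_range] at *
        omega
      · intro x hx hx2
        simp only [Finset.mem_range, Finset.mem_Icc, not_and, not_le] at *
        rw [Nat.choose_eq_zero_of_lt (show x < m by omega)]
        simp
    rw [hsplit]
    have hterm : ∀ j ∈ Finset.Icc m k,
        (-1 : ℤ) ^ (m + j) * (j.choose m : ℤ) * (k.choose j : ℤ)
          = (k.choose m : ℤ) * ((-1 : ℤ) ^ (m + j) * ((k - m).choose (j - m) : ℤ)) := by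
      intro j hj
      simp only [Finset.mem_Icc] at hj
      have hmul := Nat.choose_mul (n := k) (k := j) (s := m) hj.1
      have hcast : (k.choose j : ℤ) * (j.choose m : ℤ)
          = (k.choose m : ℤ) * ((k - m).choose (j - m) : ℤ) := by
        exact_mod_cast congrArg (Nat.cast : ℕ → ℤ) hmul
      linear_combination ((-1 : ℤ) ^ (m + j)) * hcast
    rw [Finset.sum_congr rfl hterm, ← Finset.mul_sum]
    have hIcc : Finset.Icc m k = Finset.Ico m (k + 1) := by
      rw [Finset.Ico_add_one_right_eq_Icc]
    rw [hIcc, Finset.sum_Ico_eq_sum_range]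
    have hkm1 : k + 1 - m = (k - m) + 1 := by omega
    rw [hkm1]
    have hsum : ∑ i ∈ Finset.range ((k - m) + 1),
        (-1 : ℤ) ^ (m + (m + i)) * ((k - m).choose (m + i - m) : ℤ)
        = ∑ i ∈ Finset.range ((k - m) + 1), (-1 : ℤ) ^ i * ((k - m).choose i : ℤ) := by
      apply Finset.sum_congr rfl
      intro i _
      have h1 : m + (m + i) = 2 * m + i := by ring
      have h2 : m + i - m = i := by omega
      rw [h1, h2, pow_add, pow_mul]
      simp
    rw [hsum, Int.alternating_sum_range_choose]
    by_cases hkm2 : k = m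
    · subst hkm2
      simp
    · rw [if_neg (by omega), if_neg hkm2, mul_zero]

lemma chZ_eq_card (n r q j : ℕ) (hr : 1 ≤ r) :
    chZ ((n : ℤ) - q * j - 1) ((r : ℤ) - 1) = ((compositions (n - q * j) r).card : ℤ) := by
  rcases le_or_gt (q * j + r) n with h | h
  · have hN : r ≤ n - q * j := by omega
    rw [card_compositions r (n - q * j) hr hN]
    unfold chZ
    rw [if_pos (by push_cast; omega)]
    congr 2 <;> omega
  · have hcard : (compositions (n - q * j) r).card = 0 := by
      rw [Finset.card_eq_zero]
      apply Finset.eq_empty_of_forall_notMem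
      intro c hc
      have hle := sum_ge_card hc
      omega
    rw [hcard]
    unfold chZ
    rw [if_neg (by push_cast; omega)]
    simp

theorem stmt_4 (n r q m : ℕ) (hn : 1 ≤ n) (hr : 1 ≤ r) (hq : 1 ≤ q) :
    (((compositions n r).filter
          fun c => (Finset.univ.filter fun i => q < c i).card = m).card : ℤ) =
      ∑ j ∈ Finset.Icc m (min r ((n - r) / q)),
        (-1 : ℤ) ^ (m + j) * (j.choose m : ℤ) * (r.choose j : ℤ) *
          chZ ((n : ℤ) - q * j - 1) ((r : ℤ) - 1) := by
  rcases lt_or_ge r m with hrm | hrm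
  · -- m > r : both sides zero
    have hL : ((compositions n r).filter
        fun c => (Finset.univ.filter fun i => q < c i).card = m).card = 0 := by
      rw [Finset.card_eq_zero]
      apply Finset.eq_empty_of_forall_notMem
      intro c hc
      simp only [Finset.mem_filter] at hc
      have hle : (Finset.univ.filter fun i => q < c i).card ≤ r := by
        calc _ ≤ (Finset.univ : Finset (Fin r)).card := Finset.card_filter_le _ _
        _ = r := by rw [Finset.card_univ, Fintype.card_fin]
      exact absurd hle (not_le.mpr (hc.2 ▸ hrm))
    have hR : Finset.Icc m (min r ((n - r) / q)) = ∅ := by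
      apply Finset.Icc_eq_empty
      intro hcon
      exact absurd (le_trans hcon (min_le_left _ _)) (not_le.mpr hrm)
    rw [hR, Finset.sum_empty, hL]
    simp
  · -- main case m ≤ r
    have hsub : Finset.Icc m (min r ((n - r) / q)) ⊆ Finset.Icc m r := by
      intro x hx
      simp only [Finset.mem_Icc] at *
      exact ⟨hx.1, le_trans hx.2 (min_le_left _ _)⟩
    have hstep1 : ∑ j ∈ Finset.Icc m (min r ((n - r) / q)),
        (-1 : ℤ) ^ (m + j) * (j.choose m : ℤ) * (r.choose j : ℤ) *
          chZ ((n : ℤ) - q * j - 1) ((r : ℤ) - 1)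
        = ∑ j ∈ Finset.Icc m r,
        (-1 : ℤ) ^ (m + j) * (j.choose m : ℤ) * (r.choose j : ℤ) *
          chZ ((n : ℤ) - q * j - 1) ((r : ℤ) - 1) := by
      apply Finset.sum_subset hsub
      intro j hj hj2
      rw [Finset.mem_Icc] at hj
      have hjd : (n - r) / q < j := by
        rcases lt_or_ge ((n - r) / q) j with h | h
        · exact h
        · exact absurd (Finset.mem_Icc.mpr ⟨hj.1, le_min hj.2 h⟩) hj2
      have hqd : n - r < j * q := (Nat.div_lt_iff_lt_mul (by omega)).mp hjd
      have hcomm : j * q = q * j := Nat.mul_comm j q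
      have hnlt : n < q * j + r := by omega
      have hlt : ¬ (0 ≤ (r : ℤ) - 1 ∧ (r : ℤ) - 1 ≤ (n : ℤ) - q * j - 1) := by
        push_cast
        omega
      unfold chZ
      rw [if_neg hlt]
      ring
    rw [hstep1]
    have hc : ∀ j ∈ Finset.Icc m r,
        (-1 : ℤ) ^ (m + j) * (j.choose m : ℤ) * (r.choose j : ℤ) *
          chZ ((n : ℤ) - q * j - 1) ((r : ℤ) - 1)
        = (-1 : ℤ) ^ (m + j) * (j.choose m : ℤ) * ((r.choose j : ℤ) *
          ((compositions (n - q * j) r).card : ℤ)) := by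
      intro j _
      rw [chZ_eq_card n r q j hr]
      ring
    rw [Finset.sum_congr rfl hc]
    have hIccR : Finset.Icc m r = (Finset.range (r + 1)).filter (fun j => m ≤ j) := by
      ext x
      simp only [Finset.mem_Icc, Finset.mem_filter, Finset.mem_range]
      omega
    rw [hIccR, Finset.sum_filter]
    have hzero : ∀ j ∈ Finset.range (r + 1),
        (if m ≤ j then (-1 : ℤ) ^ (m + j) * (j.choose m : ℤ) * ((r.choose j : ℤ) *
          ((compositions (n - q * j) r).card : ℤ)) else 0)
        = (-1 : ℤ) ^ (m + j) * (j.choose m : ℤ) * ((r.choose j : ℤ) *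
          ((compositions (n - q * j) r).card : ℤ)) := by
      intro j _
      by_cases hmj : m ≤ j
      · rw [if_pos hmj]
      · rw [if_neg hmj, Nat.choose_eq_zero_of_lt (show j < m by omega)]
        simp
    rw [Finset.sum_congr rfl hzero]
    have hdc : ∀ j, (r.choose j : ℤ) * ((compositions (n - q * j) r).card : ℤ)
        = ∑ k ∈ Finset.range (r + 1), (k.choose j : ℤ) *
            (((compositions n r).filter
              fun c => (Finset.univ.filter fun i => q < c i).card = k).card : ℤ) := by
      intro j
      have := double_count n r q j hr
      exact_mod_cast congrArg (Nat.cast : ℕ → ℤ) this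
    symm
    calc ∑ j ∈ Finset.range (r + 1),
          (-1 : ℤ) ^ (m + j) * (j.choose m : ℤ) * ((r.choose j : ℤ) *
            ((compositions (n - q * j) r).card : ℤ))
        = ∑ j ∈ Finset.range (r + 1), ∑ k ∈ Finset.range (r + 1),
          ((-1 : ℤ) ^ (m + j) * (j.choose m : ℤ) * (k.choose j : ℤ)) *
            (((compositions n r).filter
              fun c => (Finset.univ.filter fun i => q < c i).card = k).card : ℤ) := by
          apply Finset.sum_congr rfl
          intro j _
          rw [hdc j, Finset.mul_sum]
          apply Finset.sum_congr rfl
          intro k _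
          ring
      _ = ∑ k ∈ Finset.range (r + 1),
          (∑ j ∈ Finset.range (r + 1),
            (-1 : ℤ) ^ (m + j) * (j.choose m : ℤ) * (k.choose j : ℤ)) *
            (((compositions n r).filter
              fun c => (Finset.univ.filter fun i => q < c i).card = k).card : ℤ) := by
          rw [Finset.sum_comm]
          apply Finset.sum_congr rfl
          intro k _
          rw [Finset.sum_mul]
      _ = ∑ k ∈ Finset.range (r + 1),
          (if k = m then (((compositions n r).filter
              fun c => (Finset.univ.filter fun i => q < c i).card = k).card : ℤ) else 0) := by
          apply Finset.sum_congr rfl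
          intro k hk
          simp only [Finset.mem_range] at hk
          rw [inv_aux k m r (by omega)]
          by_cases hkm : k = m
          · rw [if_pos hkm, if_pos hkm, one_mul]
          · rw [if_neg hkm, if_neg hkm, zero_mul]
      _ = (((compositions n r).filter
            fun c => (Finset.univ.filter fun i => q < c i).card = m).card : ℤ) := by
          rw [Finset.sum_ite_eq' (Finset.range (r + 1)) m]
          rw [if_pos (Finset.mem_range.mpr (by omega))]
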